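/- For all integers d ≥ 1 and r ≥ 1, the number j_r(ℤ^d) of subgroups of index r in the free abelian group ℤ^d satisfies j_r(ℤ^d) = Σ_{r_1 r_2 ⋯ r_d = r} r_2 · r_3² ⋯ r_d^{d−1}, where the sum is over all d-tuples (r_1,…,r_d) of positive integers with product r. Moreover, for d ≥ 2, j_r(ℤ^d) = Σ_{m ∣ r} m · j_m(ℤ^{d−1}), the sum over all positive divisors m of r. -/

import Mathlib

/-- `j_r(ℤ^d)`: the number of subgroups of index `r` in `ℤ^d`. -/
noncomputable def jZ (d r : ℕ) : ℕ :=
  Nat.card {H : AddSubgroup (Fin d → ℤ) // H.index = r}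

open AddSubgroup

section Core

variable {M : Type*} [AddCommGroup M]

/-- The shear automorphism of `ℤ × M` sending `(x, y)` to `(x, x • v + y)`. -/
def shear (v : M) : (ℤ × M) ≃+ (ℤ × M) where
  toFun p := (p.1, p.1 • v + p.2)
  invFun p := (p.1, -(p.1 • v) + p.2)
  left_inv p := by simp
  right_inv p := by simp
  map_add' p q := by
    ext
    · rfl
    · simp [add_smul]; abel

/-- The dilation `(x, y) ↦ (x * a, y)` of `ℤ × M`. -/
def dilate (a : ℕ) : (ℤ × M) →+ (ℤ × M) :=
  AddMonoidHom.prodMap (AddMonoidHom.mk' (fun x : ℤ => x * a) (by intro x y; ring))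
    (AddMonoidHom.id M)

/-- The subgroup of `ℤ × M` generated by `{0} × H'` together with `(a, v)`. -/
def Hof (a : ℕ) (H' : AddSubgroup M) (v : M) : AddSubgroup (ℤ × M) :=
  AddSubgroup.map ((dilate a).comp (shear v).toAddMonoidHom) ((⊤ : AddSubgroup ℤ).prod H')

lemma mem_Hof {a : ℕ} {H' : AddSubgroup M} {v : M} {p : ℤ × M} :
    p ∈ Hof a H' v ↔ ∃ k : ℤ, ∃ h ∈ H', p = (k * a, k • v + h) := by
  simp only [Hof, AddSubgroup.mem_map, AddSubgroup.mem_prod, AddMonoidHom.coe_comp,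
    Function.comp_apply, AddSubgroup.mem_top, true_and]
  constructor
  · rintro ⟨⟨k, h⟩, hh, rfl⟩
    exact ⟨k, h, hh, rfl⟩
  · rintro ⟨k, h, hh, rfl⟩
    exact ⟨⟨k, h⟩, hh, rfl⟩

lemma mem_Hof' {a : ℕ} {H' : AddSubgroup M} {v : M} {p : ℤ × M} :
    p ∈ Hof a H' v ↔ ∃ k : ℤ, p.1 = k * a ∧ p.2 - k • v ∈ H' := by
  rw [mem_Hof]
  constructor
  · rintro ⟨k, h, hh, rfl⟩
    exact ⟨k, rfl, by simpa using hh⟩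
  · rintro ⟨k, h1, h2⟩
    exact ⟨k, p.2 - k • v, h2, by rw [← h1]; ext <;> simp⟩

lemma Hof_congr {a : ℕ} {H' : AddSubgroup M} {v w : M} (hvw : v - w ∈ H') :
    Hof a H' v = Hof a H' w := by
  ext p
  rw [mem_Hof', mem_Hof']
  refine exists_congr fun k => and_congr_right fun _ => ⟨fun h => ?_, fun h => ?_⟩
  · have := AddSubgroup.add_mem _ h (AddSubgroup.zsmul_mem _ hvw k)
    convert this using 1
    rw [smul_sub]; abel
  · have := AddSubgroup.sub_mem _ h (AddSubgroup.zsmul_mem _ hvw k)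
    convert this using 1
    rw [smul_sub]; abel

lemma range_dilate (a : ℕ) :
    (dilate a : (ℤ × M) →+ (ℤ × M)).range = (zmultiples (a : ℤ)).prod ⊤ := by
  ext p
  simp only [AddMonoidHom.mem_range, AddSubgroup.mem_prod, AddSubgroup.mem_top, and_true,
    mem_zmultiples_iff]
  constructor
  · rintro ⟨⟨x, y⟩, rfl⟩
    exact ⟨x, by simp [dilate, zsmul_eq_mul]⟩
  · rintro ⟨k, hk⟩
    exact ⟨(k, p.2), by ext <;> simp [dilate] <;> rw [← hk] <;> simp [zsmul_eq_mul]⟩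

@[simp] lemma dilate_apply {a : ℕ} (p : ℤ × M) : dilate a p = (p.1 * a, p.2) := rfl

lemma dilate_injective {a : ℕ} (ha : a ≠ 0) :
    Function.Injective (dilate a : (ℤ × M) →+ (ℤ × M)) := by
  rintro ⟨x, y⟩ ⟨x', y'⟩ h
  rw [dilate_apply, dilate_apply, Prod.mk.injEq] at h
  obtain ⟨h1, h2⟩ := h
  have ha' : (a : ℤ) ≠ 0 := Int.natCast_ne_zero.mpr ha
  have : x = x' := mul_right_cancel₀ ha' h1
  exact Prod.ext this h2

lemma index_Hof {a : ℕ} (ha : a ≠ 0) (H' : AddSubgroup M) (v : M) :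
    (Hof a H' v).index = a * H'.index := by
  have h1 : Hof a H' v =
      AddSubgroup.map (dilate a)
        (AddSubgroup.map (shear v).toAddMonoidHom ((⊤ : AddSubgroup ℤ).prod H')) := by
    rw [Hof, ← AddSubgroup.map_map]
  rw [h1, AddSubgroup.index_map_of_injective _ (dilate_injective ha),
    AddSubgroup.index_map_eq _ (shear v).surjective
      (by rintro x hx
          have hx0 : x = 0 := (shear v).injective (by simpa [AddMonoidHom.mem_ker] using hx)
          rw [hx0]; exact zero_mem _),
    AddSubgroup.index_prod, range_dilate, AddSubgroup.index_prod, Int.index_zmultiples]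
  simp [mul_comm]

end Core

section Structure

variable {M : Type*} [AddCommGroup M]

lemma map_fst_Hof (a : ℕ) (H' : AddSubgroup M) (v : M) :
    (Hof a H' v).map (AddMonoidHom.fst ℤ M) = zmultiples (a : ℤ) := by
  ext x
  simp only [AddSubgroup.mem_map, mem_zmultiples_iff, AddMonoidHom.coe_fst]
  constructor
  · rintro ⟨p, hp, rfl⟩
    obtain ⟨k, h, hh, rfl⟩ := mem_Hof.mp hp
    exact ⟨k, by simp [zsmul_eq_mul]⟩
  · rintro ⟨k, hk⟩
    exact ⟨(k * a, k • v), mem_Hof.mpr ⟨k, 0, zero_mem _, by simp⟩, by simpa [zsmul_eq_mul] using hk⟩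

lemma comap_inl_Hof {a : ℕ} (ha : a ≠ 0) (H' : AddSubgroup M) (v : M) :
    (Hof a H' v).comap (AddMonoidHom.inr ℤ M) = H' := by
  ext y
  simp only [AddSubgroup.mem_comap, AddMonoidHom.inr_apply]
  rw [mem_Hof']
  constructor
  · rintro ⟨k, hk1, hk2⟩
    have hk : k = 0 := by
      have ha' : (a : ℤ) ≠ 0 := Int.natCast_ne_zero.mpr ha
      rcases mul_eq_zero.mp hk1.symm with h | h
      · exact h
      · exact absurd h ha'
    simpa [hk] using hk2
  · intro hy
    exact ⟨0, by simp, by simpa using hy⟩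

/-- A finite-index subgroup of `ℤ` is `zmultiples` of its index. -/
lemma int_eq_zmultiples_index {B : AddSubgroup ℤ} (h : B.index ≠ 0) :
    B = zmultiples ((B.index : ℤ)) := by
  obtain ⟨g, hg⟩ := Int.subgroup_cyclic B
  have hB : B = zmultiples g := by rw [hg, AddSubgroup.zmultiples_eq_closure]
  rw [hB, Int.index_zmultiples, Int.zmultiples_natAbs]

/-- Structure theorem: a subgroup of `ℤ × M` whose projection to `ℤ` is `zmultiples a`,
containing `(a, v)`, equals `Hof a (comap inl H) v`. -/
lemma Hof_eq_self {H : AddSubgroup (ℤ × M)} {a : ℕ} (ha : a ≠ 0)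
    (hz : H.map (AddMonoidHom.fst ℤ M) = zmultiples (a : ℤ)) {v : M}
    (hv : ((a : ℤ), v) ∈ H) :
    Hof a (H.comap (AddMonoidHom.inr ℤ M)) v = H := by
  ext p
  rw [mem_Hof']
  constructor
  · rintro ⟨k, hk1, hk2⟩
    have h1 : ((0 : ℤ), p.2 - k • v) ∈ H := hk2
    have h2 : k • (((a : ℤ), v)) ∈ H := AddSubgroup.zsmul_mem _ hv k
    have : ((0 : ℤ), p.2 - k • v) + k • (((a : ℤ), v)) = p := by
      ext
      · simp [hk1, zsmul_eq_mul, mul_comm]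
      · simp
    rw [← this]
    exact AddSubgroup.add_mem _ h1 h2
  · intro hp
    have h1 : p.1 ∈ H.map (AddMonoidHom.fst ℤ M) := ⟨p, hp, rfl⟩
    rw [hz, mem_zmultiples_iff] at h1
    obtain ⟨k, hk⟩ := h1
    refine ⟨k, by rw [← hk]; simp [zsmul_eq_mul], ?_⟩
    have h2 : p - k • (((a : ℤ), v)) ∈ H := AddSubgroup.sub_mem _ hp (AddSubgroup.zsmul_mem _ hv k)
    have : p - k • (((a : ℤ), v)) = ((0 : ℤ), p.2 - k • v) := by
      ext
      · simp [← hk, zsmul_eq_mul]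
      · simp
    rwa [this] at h2

end Structure

section Fiber

variable {M : Type*} [AddCommGroup M]

lemma map_fst_eq_zmultiples {H : AddSubgroup (ℤ × M)} {a : ℕ} (ha : a ≠ 0)
    (h1 : (H.map (AddMonoidHom.fst ℤ M)).index = a) :
    H.map (AddMonoidHom.fst ℤ M) = zmultiples ((a : ℤ)) := by
  have := int_eq_zmultiples_index (B := H.map (AddMonoidHom.fst ℤ M)) (by rw [h1]; exact ha)
  rwa [h1] at this

lemma exists_gen {H : AddSubgroup (ℤ × M)} {a : ℕ} (ha : a ≠ 0)
    (h1 : (H.map (AddMonoidHom.fst ℤ M)).index = a) : ∃ v : M, ((a : ℤ), v) ∈ H := by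
  have hmem : ((a : ℤ)) ∈ H.map (AddMonoidHom.fst ℤ M) := by
    rw [map_fst_eq_zmultiples ha h1]
    exact mem_zmultiples _
  obtain ⟨x, hx, hx1⟩ := hmem
  refine ⟨x.2, ?_⟩
  have : ((a : ℤ), x.2) = x := by ext <;> simp [← hx1]
  rwa [this]

lemma Hof_eq_self' {H : AddSubgroup (ℤ × M)} {a : ℕ} (ha : a ≠ 0) {H' : AddSubgroup M}
    (h1 : (H.map (AddMonoidHom.fst ℤ M)).index = a)
    (h2 : H.comap (AddMonoidHom.inr ℤ M) = H') {v : M} (hv : ((a : ℤ), v) ∈ H) :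
    Hof a H' v = H := by
  subst h2
  exact Hof_eq_self ha (map_fst_eq_zmultiples ha h1) hv

/-- The fiber of the invariants `(a, H')` is in bijection with `M ⧸ H'`. -/
noncomputable def fiberEquiv (a : ℕ) (ha : a ≠ 0) (H' : AddSubgroup M) :
    {H : AddSubgroup (ℤ × M) //
      (H.map (AddMonoidHom.fst ℤ M)).index = a ∧ H.comap (AddMonoidHom.inr ℤ M) = H'}
      ≃ M ⧸ H' where
  toFun H := QuotientAddGroup.mk (exists_gen ha H.2.1).choose
  invFun vbar := Quotient.liftOn' vbar
    (fun v => ⟨Hof a H' v, by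
      rw [map_fst_Hof, Int.index_zmultiples]
      simp, comap_inl_Hof ha H' v⟩)
    (fun v w hvw => by
      have h1 : -v + w ∈ H' := QuotientAddGroup.leftRel_apply.mp hvw
      have h2 : v - w ∈ H' := by
        have := AddSubgroup.neg_mem _ h1
        simpa [neg_add_rev, sub_eq_add_neg, add_comm] using this
      exact Subtype.ext (Hof_congr h2))
  left_inv H := by
    apply Subtype.ext
    have hv := (exists_gen ha H.2.1).choose_spec
    exact Hof_eq_self' ha H.2.1 H.2.2 hv
  right_inv := by
    intro vbar
    induction vbar using Quotient.inductionOn' with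
    | h v =>
      show QuotientAddGroup.mk _ = _
      have hw := (exists_gen (H := (⟨Hof a H' v, by
          rw [map_fst_Hof, Int.index_zmultiples]; simp, comap_inl_Hof ha H' v⟩ :
          {H : AddSubgroup (ℤ × M) //
            (H.map (AddMonoidHom.fst ℤ M)).index = a ∧
              H.comap (AddMonoidHom.inr ℤ M) = H'}).1) ha (by
          rw [map_fst_Hof, Int.index_zmultiples]; simp)).choose_spec
      obtain ⟨k, hk1, hk2⟩ := mem_Hof'.mp hw
      have hk : k = 1 := by
        have ha' : (a : ℤ) ≠ 0 := Int.natCast_ne_zero.mpr ha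
        have : 1 * (a : ℤ) = k * a := by simpa using hk1
        exact (mul_right_cancel₀ ha' this).symm
      rw [hk, one_smul] at hk2
      show _ = Quotient.mk'' v
      rw [QuotientAddGroup.eq]
      simpa [neg_add_eq_sub] using AddSubgroup.neg_mem _ hk2

end Fiber

section Count

lemma nat_card_sigma {ι : Type*} [Fintype ι] (f : ι → Type*) [∀ i, Finite (f i)] :
    Nat.card (Σ i, f i) = ∑ i, Nat.card (f i) := by
  letI : ∀ i, Fintype (f i) := fun i => Fintype.ofFinite _
  simp_rw [Nat.card_eq_fintype_card]
  exact Fintype.card_sigma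

variable {M : Type*} [AddCommGroup M]

theorem core_count {r : ℕ} (hr : r ≠ 0)
    (hfin : ∀ m : ℕ, m ≠ 0 → Finite {K : AddSubgroup M // K.index = m}) :
    Finite {H : AddSubgroup (ℤ × M) // H.index = r} ∧
    Nat.card {H : AddSubgroup (ℤ × M) // H.index = r}
      = ∑ a ∈ r.divisors, (r / a) * Nat.card {K : AddSubgroup M // K.index = r / a} := by
  classical
  set T := {H : AddSubgroup (ℤ × M) // H.index = r} with hT
  have hfst : Function.Surjective (AddMonoidHom.fst ℤ M) := Prod.fst_surjective
  -- the invariant `a`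
  have Fmem : ∀ H : T, (H.1.map (AddMonoidHom.fst ℤ M)).index ∈ r.divisors := by
    intro H
    rw [Nat.mem_divisors]
    have h := AddSubgroup.index_map_dvd (H := H.1) hfst
    rw [H.2] at h
    exact ⟨h, hr⟩
  set F : T → {a : ℕ // a ∈ r.divisors} := fun H => ⟨_, Fmem H⟩ with hF
  have ha_ne : ∀ a : {a : ℕ // a ∈ r.divisors}, (a : ℕ) ≠ 0 := by
    rintro ⟨a, ha⟩ rfl
    exact hr (Nat.eq_zero_of_zero_dvd (Nat.mem_divisors.mp ha).1)
  have hdvd : ∀ a : {a : ℕ // a ∈ r.divisors}, (a : ℕ) ∣ r := fun a =>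
    (Nat.mem_divisors.mp a.2).1
  -- index of the kernel part
  have Gidx : ∀ (a : {a : ℕ // a ∈ r.divisors}) (t : {t : T // F t = a}),
      (t.1.1.comap (AddMonoidHom.inr ℤ M)).index = r / (a : ℕ) := by
    intro a t
    have h1 : (t.1.1.map (AddMonoidHom.fst ℤ M)).index = (a : ℕ) := congrArg Subtype.val t.2
    obtain ⟨v, hv⟩ := exists_gen (ha_ne a) h1
    have h2 := index_Hof (ha_ne a) (t.1.1.comap (AddMonoidHom.inr ℤ M)) v
    rw [Hof_eq_self' (ha_ne a) h1 rfl hv] at h2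
    have h3 : r = (a : ℕ) * (t.1.1.comap (AddMonoidHom.inr ℤ M)).index := by
      conv_lhs => rw [← t.1.2]
      exact h2
    exact (Nat.div_eq_of_eq_mul_right (Nat.pos_of_ne_zero (ha_ne a)) h3).symm
  set G : ∀ a : {a : ℕ // a ∈ r.divisors},
      {t : T // F t = a} → {K : AddSubgroup M // K.index = r / (a : ℕ)} :=
    fun a t => ⟨_, Gidx a t⟩ with hG
  -- identify the fibers of `G a`
  have e0 : ∀ (a : {a : ℕ // a ∈ r.divisors}) (K : {K : AddSubgroup M // K.index = r / (a : ℕ)}),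
      {u : {t : T // F t = a} // G a u = K} ≃
        {H : AddSubgroup (ℤ × M) //
          (H.map (AddMonoidHom.fst ℤ M)).index = (a : ℕ) ∧
            H.comap (AddMonoidHom.inr ℤ M) = K.1} := by
    intro a K
    refine ⟨fun u => ⟨u.1.1.1, congrArg Subtype.val u.1.2, congrArg Subtype.val u.2⟩,
      fun H => ⟨⟨⟨H.1, ?_⟩, Subtype.ext H.2.1⟩, Subtype.ext H.2.2⟩, fun u => ?_, fun H => ?_⟩
    · -- index of such an H is r
      obtain ⟨v, hv⟩ := exists_gen (ha_ne a) H.2.1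
      have h2 := index_Hof (ha_ne a) (H.1.comap (AddMonoidHom.inr ℤ M)) v
      rw [Hof_eq_self' (ha_ne a) H.2.1 rfl hv] at h2
      rw [h2, H.2.2, K.2, Nat.mul_div_cancel' (hdvd a)]
    · exact Subtype.ext (Subtype.ext (Subtype.ext rfl))
    · exact Subtype.ext rfl
  -- the global bijection
  have E : T ≃ Σ a : {a : ℕ // a ∈ r.divisors},
      Σ K : {K : AddSubgroup M // K.index = r / (a : ℕ)}, M ⧸ K.1 :=
    (Equiv.sigmaFiberEquiv F).symm.trans
      (Equiv.sigmaCongrRight fun a =>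
        (Equiv.sigmaFiberEquiv (G a)).symm.trans
          (Equiv.sigmaCongrRight fun K => (e0 a K).trans (fiberEquiv _ (ha_ne a) K.1)))
  -- finiteness
  have hrdiv_ne : ∀ a : {a : ℕ // a ∈ r.divisors}, r / (a : ℕ) ≠ 0 := by
    intro a
    exact Nat.div_ne_zero_iff.mpr ⟨ha_ne a, Nat.le_of_dvd (Nat.pos_of_ne_zero hr) (hdvd a)⟩
  haveI : ∀ a : {a : ℕ // a ∈ r.divisors},
      Finite {K : AddSubgroup M // K.index = r / (a : ℕ)} := fun a => hfin _ (hrdiv_ne a)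
  haveI : ∀ (a : {a : ℕ // a ∈ r.divisors}) (K : {K : AddSubgroup M // K.index = r / (a : ℕ)}),
      Finite (M ⧸ K.1) := by
    intro a K
    haveI : (K.1).FiniteIndex := ⟨by rw [K.2]; exact hrdiv_ne a⟩
    infer_instance
  haveI hTfin : Finite T := Finite.of_equiv _ E.symm
  refine ⟨hTfin, ?_⟩
  rw [Nat.card_congr E, nat_card_sigma]
  have inner : ∀ a : {a : ℕ // a ∈ r.divisors},
      Nat.card (Σ K : {K : AddSubgroup M // K.index = r / (a : ℕ)}, M ⧸ K.1)
        = (r / (a : ℕ)) * Nat.card {K : AddSubgroup M // K.index = r / (a : ℕ)} := by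
    intro a
    letI : Fintype {K : AddSubgroup M // K.index = r / (a : ℕ)} := Fintype.ofFinite _
    rw [nat_card_sigma]
    have : ∀ K : {K : AddSubgroup M // K.index = r / (a : ℕ)},
        Nat.card (M ⧸ K.1) = r / (a : ℕ) := by
      intro K
      rw [← AddSubgroup.index_eq_card, K.2]
    simp_rw [this]
    rw [Finset.sum_const, smul_eq_mul, mul_comm, Nat.card_eq_fintype_card,
      Finset.card_univ]
  simp_rw [inner]
  rw [← Finset.sum_coe_sort r.divisors (fun a => (r / a) * Nat.card {K : AddSubgroup M // K.index = r / a})]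

end Count

section Transport

variable {A B : Type*} [AddGroup A] [AddGroup B]

lemma index_map_addEquiv (e : A ≃+ B) (H : AddSubgroup A) :
    (H.map e.toAddMonoidHom).index = H.index := by
  refine AddSubgroup.index_map_eq _ e.surjective ?_
  intro x hx
  have h0 : e x = 0 := by simpa [AddMonoidHom.mem_ker] using hx
  have hx0 : x = 0 := by apply e.injective; rw [h0, map_zero]
  rw [hx0]; exact zero_mem _

/-- Transport of the set of index-`r` subgroups along an additive equivalence. -/
def subgroupIndexEquiv (e : A ≃+ B) (r : ℕ) :
    {H : AddSubgroup A // H.index = r} ≃ {H : AddSubgroup B // H.index = r} := by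
  have comp : ∀ H : AddSubgroup A, (H.map e.toAddMonoidHom).map e.symm.toAddMonoidHom = H := by
    intro H
    rw [AddSubgroup.map_map]
    have : (e.symm.toAddMonoidHom.comp e.toAddMonoidHom) = AddMonoidHom.id A := by
      ext x; simp
    rw [this, AddSubgroup.map_id]
  have comp' : ∀ H : AddSubgroup B, (H.map e.symm.toAddMonoidHom).map e.toAddMonoidHom = H := by
    intro H
    rw [AddSubgroup.map_map]
    have : (e.toAddMonoidHom.comp e.symm.toAddMonoidHom) = AddMonoidHom.id B := by
      ext x; simp
    rw [this, AddSubgroup.map_id]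
  exact
    { toFun := fun H => ⟨H.1.map e.toAddMonoidHom, by rw [index_map_addEquiv e, H.2]⟩
      invFun := fun H => ⟨H.1.map e.symm.toAddMonoidHom, by rw [index_map_addEquiv e.symm, H.2]⟩
      left_inv := fun H => Subtype.ext (comp H.1)
      right_inv := fun H => Subtype.ext (comp' H.1) }

end Transport

section Zd

/-- `ℤ^{d+1} ≃+ ℤ × ℤ^d`. -/
def zdEquiv (d : ℕ) : (Fin (d + 1) → ℤ) ≃+ ℤ × (Fin d → ℤ) where
  toFun f := (f 0, f ∘ Fin.succ)
  invFun p := Fin.cons p.1 p.2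
  left_inv f := Fin.cons_self_tail f
  right_inv p := by ext <;> simp
  map_add' f g := rfl

lemma jZ_zero (r : ℕ) : jZ 0 r = if r = 1 then 1 else 0 := by
  have hbot : ∀ H : AddSubgroup (Fin 0 → ℤ), H = ⊥ := by
    intro H
    ext x
    simp only [AddSubgroup.mem_bot]
    refine ⟨fun _ => funext fun i => i.elim0, fun h => ?_⟩
    rw [h]; exact zero_mem H
  have hidx : ∀ H : AddSubgroup (Fin 0 → ℤ), H.index = 1 := by
    intro H
    rw [hbot H, AddSubgroup.index_bot]
    exact Nat.card_eq_one_iff_unique.mpr ⟨⟨fun a b => funext fun i => i.elim0⟩, ⟨0⟩⟩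
  rw [jZ]
  split_ifs with h
  · subst h
    rw [Nat.card_eq_one_iff_unique]
    exact ⟨⟨fun a b => Subtype.ext ((hbot a.1).trans (hbot b.1).symm)⟩, ⟨⊥, hidx ⊥⟩⟩
  · haveI : IsEmpty {H : AddSubgroup (Fin 0 → ℤ) // H.index = r} :=
      ⟨fun H => h (by rw [← H.2, hidx H.1])⟩
    exact Nat.card_of_isEmpty

lemma finite_jZ (d : ℕ) : ∀ r : ℕ, r ≠ 0 → Finite {H : AddSubgroup (Fin d → ℤ) // H.index = r} := by
  induction d with
  | zero =>
    intro r hr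
    exact Finite.of_injective (fun _ => ()) (fun a b _ => by
      exact Subtype.ext (by
        have hbot : ∀ H : AddSubgroup (Fin 0 → ℤ), H = ⊥ := by
          intro H; ext x
          simp only [AddSubgroup.mem_bot]
          refine ⟨fun _ => funext fun i => i.elim0, fun h => ?_⟩
          rw [h]; exact zero_mem H
        rw [hbot a.1, hbot b.1]))
  | succ d ih =>
    intro r hr
    haveI := (core_count (M := Fin d → ℤ) hr ih).1
    exact Finite.of_equiv _ (subgroupIndexEquiv (zdEquiv d) r).symm

lemma jZ_succ (d r : ℕ) (hr : r ≠ 0) :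
    jZ (d + 1) r = ∑ m ∈ r.divisors, m * jZ d m := by
  have h1 : jZ (d + 1) r = Nat.card {H : AddSubgroup (ℤ × (Fin d → ℤ)) // H.index = r} :=
    Nat.card_congr (subgroupIndexEquiv (zdEquiv d) r)
  rw [h1, (core_count hr (finite_jZ d)).2]
  exact Nat.sum_div_divisors r (fun m => m * jZ d m)

end Zd

section Comb

open Finset

lemma comb (d r : ℕ) (hr : r ≠ 0) :
    ∑ f ∈ (Fintype.piFinset fun _ : Fin (d + 1) => Finset.Icc 1 r).filter
        (fun f => ∏ i, f i = r), ∏ i : Fin (d + 1), f i ^ (i : ℕ)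
      = ∑ m ∈ r.divisors, m *
          ∑ g ∈ (Fintype.piFinset fun _ : Fin d => Finset.Icc 1 m).filter
            (fun g => ∏ i, g i = m), ∏ i : Fin d, g i ^ (i : ℕ) := by
  have hrpos : 0 < r := Nat.pos_of_ne_zero hr
  have hR : (∑ m ∈ r.divisors, m *
        ∑ g ∈ (Fintype.piFinset fun _ : Fin d => Finset.Icc 1 m).filter
          (fun g => ∏ i, g i = m), ∏ i : Fin d, g i ^ (i : ℕ))
      = ∑ p ∈ r.divisors.sigma (fun m =>
          (Fintype.piFinset fun _ : Fin d => Finset.Icc 1 m).filter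
            (fun g => ∏ i, g i = m)), p.1 * ∏ i : Fin d, p.2 i ^ (i : ℕ) := by
    rw [Finset.sum_sigma]
    exact Finset.sum_congr rfl fun m _ => Finset.mul_sum _ _ _
  rw [hR]
  refine (Finset.sum_bij'
    (i := fun (p : Σ _ : ℕ, Fin d → ℕ) _ => (Fin.cons (r / p.1) p.2 : Fin (d + 1) → ℕ))
    (j := fun f _ => (⟨∏ i : Fin d, f i.succ, fun i => f i.succ⟩ : Σ _ : ℕ, Fin d → ℕ))
    ?_ ?_ ?_ ?_ ?_).symm
  · -- i maps into the pi set
    rintro ⟨m, g⟩ hp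
    rw [Finset.mem_sigma] at hp
    obtain ⟨hm, hg⟩ := hp
    rw [Nat.mem_divisors] at hm
    have hmne : m ≠ 0 := fun h => hr (by simpa [h] using hm.1)
    have hmle : m ≤ r := Nat.le_of_dvd hrpos hm.1
    rw [Finset.mem_filter] at hg ⊢
    rw [Fintype.mem_piFinset] at hg ⊢
    obtain ⟨hg1, hg2⟩ := hg
    constructor
    · intro i
      refine Fin.cases ?_ ?_ i
      · simp only [Fin.cons_zero, Finset.mem_Icc]
        exact ⟨(Nat.one_le_div_iff (Nat.pos_of_ne_zero hmne)).mpr hmle, Nat.div_le_self r m⟩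
      · intro j
        simp only [Fin.cons_succ, Finset.mem_Icc]
        have := Finset.mem_Icc.mp (hg1 j)
        exact ⟨this.1, le_trans this.2 hmle⟩
    · beta_reduce
      rw [Fin.prod_univ_succ]
      simp only [Fin.cons_zero, Fin.cons_succ]
      rw [hg2, Nat.div_mul_cancel hm.1]
  · -- j maps into the sigma set
    intro f hf
    rw [Finset.mem_filter, Fintype.mem_piFinset] at hf
    obtain ⟨hf1, hf2⟩ := hf
    rw [Finset.mem_sigma]
    have hdvd : (∏ i : Fin d, f i.succ) ∣ r := by
      rw [← hf2, Fin.prod_univ_succ]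
      exact Dvd.intro_left _ rfl
    have hmne : (∏ i : Fin d, f i.succ) ≠ 0 := fun h => hr (Nat.eq_zero_of_zero_dvd (h ▸ hdvd))
    constructor
    · exact Nat.mem_divisors.mpr ⟨hdvd, hr⟩
    · rw [Finset.mem_filter, Fintype.mem_piFinset]
      refine ⟨fun i => ?_, rfl⟩
      rw [Finset.mem_Icc]
      have h1 := Finset.mem_Icc.mp (hf1 i.succ)
      refine ⟨h1.1, Nat.le_of_dvd (Nat.pos_of_ne_zero hmne) (Finset.dvd_prod_of_mem _ (Finset.mem_univ i))⟩
  · -- left inverse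
    rintro ⟨m, g⟩ hp
    rw [Finset.mem_sigma, Nat.mem_divisors] at hp
    have hg2 : ∏ i : Fin d, g i = m := (Finset.mem_filter.mp hp.2).2
    refine Sigma.ext ?_ (heq_of_eq ?_)
    · simp only [Fin.cons_succ]
      exact hg2
    · funext i
      simp [Fin.cons_succ]
  · -- right inverse
    intro f hf
    rw [Finset.mem_filter] at hf
    have hne : (∏ i : Fin d, f i.succ) ≠ 0 := by
      intro h
      have hdvd : (∏ i : Fin d, f i.succ) ∣ r := by
        rw [← hf.2, Fin.prod_univ_succ]
        exact Dvd.intro_left _ rfl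
      exact hr (Nat.eq_zero_of_zero_dvd (h ▸ hdvd))
    have h0 : r / (∏ i : Fin d, f i.succ) = f 0 := by
      rw [← hf.2, Fin.prod_univ_succ, Nat.mul_div_cancel _ (Nat.pos_of_ne_zero hne)]
    beta_reduce
    rw [h0]
    exact Fin.cons_self_tail f
  · -- values agree
    rintro ⟨m, g⟩ hp
    rw [Finset.mem_sigma, Nat.mem_divisors] at hp
    have hg2 : ∏ i : Fin d, g i = m := (Finset.mem_filter.mp hp.2).2
    beta_reduce
    rw [Fin.prod_univ_succ]
    simp only [Fin.cons_zero, Fin.cons_succ, Fin.val_zero, pow_zero, one_mul, Fin.val_succ]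
    simp_rw [pow_succ]
    rw [Finset.prod_mul_distrib, hg2, mul_comm]

end Comb

lemma jZ_formula (d r : ℕ) (hr : r ≠ 0) :
    jZ d r = ∑ f ∈ (Fintype.piFinset fun _ : Fin d => Finset.Icc 1 r).filter
      (fun f => ∏ i, f i = r), ∏ i : Fin d, f i ^ (i : ℕ) := by
  induction d generalizing r with
  | zero =>
    have hsum : ∀ s : Finset (Fin 0 → ℕ),
        ∑ f ∈ s, ∏ i : Fin 0, f i ^ (i : ℕ) = s.card := by
      intro s
      rw [Finset.sum_congr rfl fun f _ => Finset.prod_of_isEmpty _, Finset.sum_const,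
        smul_eq_mul, mul_one]
    rw [jZ_zero, hsum]
    by_cases h : r = 1
    · subst h
      rw [if_pos rfl]
      have hset : (Fintype.piFinset fun _ : Fin 0 => Finset.Icc 1 1).filter
          (fun f => ∏ i, f i = 1) = {fun i => i.elim0} := by
        ext f
        simp only [Finset.mem_filter, Fintype.mem_piFinset, Finset.mem_singleton]
        constructor
        · intro _
          exact Subsingleton.elim _ _
        · rintro rfl
          exact ⟨fun i => i.elim0, Finset.prod_of_isEmpty _⟩
      rw [hset, Finset.card_singleton]
    · rw [if_neg h, Finset.filter_false_of_mem, Finset.card_empty]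
      intro f _ hp
      rw [Finset.prod_of_isEmpty] at hp
      exact h hp.symm
  | succ d ih =>
    rw [jZ_succ d r hr, comb d r hr]
    refine Finset.sum_congr rfl fun m hm => ?_
    rw [ih m (Nat.pos_of_mem_divisors hm).ne']

/-- **Lemma 4-4.** `j_r(ℤ^d) = Σ_{r_1⋯r_d = r} r_2·r_3²⋯r_d^{d-1}`, the sum being over all
`d`-tuples of positive integers with product `r`; and for `d ≥ 2`,
`j_r(ℤ^d) = Σ_{m ∣ r} m·j_m(ℤ^{d-1})`. -/
theorem jZ_eq_sum_prod_eq (d r : ℕ) (hd : 1 ≤ d) (hr : 1 ≤ r) :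
    (jZ d r =
        ∑ f ∈ (Fintype.piFinset fun _ : Fin d => Finset.Icc 1 r).filter
            (fun f => ∏ i, f i = r),
          ∏ i : Fin d, f i ^ (i : ℕ)) ∧
      (2 ≤ d → jZ d r = ∑ m ∈ r.divisors, m * jZ (d - 1) m) := by
  have hr' : r ≠ 0 := by omega
  refine ⟨jZ_formula d r hr', fun h2 => ?_⟩
  have hd1 : d - 1 + 1 = d := by omega
  calc jZ d r = jZ (d - 1 + 1) r := by rw [hd1]
    _ = ∑ m ∈ r.divisors, m * jZ (d - 1) m := jZ_succ (d - 1) r hr'
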